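/- For every integer r ≥ 2, the smallest nonnegative integer ℓ such that every sequence over C_2^r of length at least ℓ has a nonempty zero-sum subsequence of length at most 3 is ℓ = 1 + 2^{r−1}. That is: every sequence over C_2^r of length at least 1 + 2^{r−1} has a nonempty zero-sum subsequence of length at most 3, and there exists a sequence over C_2^r of length 2^{r−1} with no nonempty zero-sum subsequence of length at most 3. -/

import Mathlib

lemma zmod2_self_add (r : ℕ) (v : Fin r → ZMod 2) : v + v = 0 := by
  funext i
  have h : ∀ a : ZMod 2, a + a = 0 := by decide
  exact h (v i)

lemma zmod2_neg (r : ℕ) (v : Fin r → ZMod 2) : -v = v := by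
  funext i
  have h : ∀ a : ZMod 2, -a = a := by decide
  exact h (v i)

/-- `s_{[1,3]}(C₂ʳ) = 1 + 2^(r-1)` for `r ≥ 2`. -/
theorem stmt_5 (r : ℕ) (hr : 2 ≤ r) :
    (∀ S : Multiset (Fin r → ZMod 2), 1 + 2 ^ (r - 1) ≤ Multiset.card S →
      ∃ T : Multiset (Fin r → ZMod 2), T ≤ S ∧ T ≠ 0 ∧ Multiset.card T ≤ 3 ∧ T.sum = 0) ∧
    (∃ S : Multiset (Fin r → ZMod 2), Multiset.card S = 2 ^ (r - 1) ∧
      ¬ ∃ T : Multiset (Fin r → ZMod 2), T ≤ S ∧ T ≠ 0 ∧ Multiset.card T ≤ 3 ∧ T.sum = 0) := by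
  constructor
  · -- upper bound
    intro S hS
    by_contra hcon
    push_neg at hcon
    -- 0 ∉ S
    have h0 : (0 : Fin r → ZMod 2) ∉ S := by
      intro h0
      exact hcon {0} (Multiset.singleton_le.mpr h0) (by simp) (by simp) (by simp)
    -- S is nodup
    have hnd : S.Nodup := by
      by_contra hnd
      rw [Multiset.nodup_iff_count_le_one] at hnd
      push_neg at hnd
      obtain ⟨x, hx⟩ := hnd
      refine hcon (Multiset.replicate 2 x) ?_ (by simp) (by simp) ?_
      · rw [Multiset.le_iff_count]
        intro a
        rw [Multiset.count_replicate]
        split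
        next h => subst h; omega
        next => omega
      · rw [Multiset.sum_replicate, two_nsmul]
        exact zmod2_self_add r x
    -- S is sum-free
    have hsf : ∀ x ∈ S, ∀ y ∈ S, x ≠ y → x + y ∉ S := by
      intro x hx y hy hxy hz
      have hzx : x + y ≠ x := by
        intro h
        rw [add_eq_left] at h
        exact h0 (h ▸ hy)
      have hzy : x + y ≠ y := by
        intro h
        rw [add_eq_right] at h
        exact h0 (h ▸ hx)
      refine hcon (x ::ₘ y ::ₘ {x + y}) ?_ (by simp) (by simp) ?_
      · rw [Multiset.le_iff_subset]
        · intro a ha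
          simp only [Multiset.mem_cons, Multiset.mem_singleton] at ha
          rcases ha with rfl | rfl | rfl <;> assumption
        · simp [Multiset.nodup_cons, hxy, hzx.symm, hzy.symm]
      · simp only [Multiset.sum_cons, Multiset.sum_singleton]
        rw [← add_assoc]
        exact zmod2_self_add r (x + y)
    -- counting argument
    classical
    set A : Finset (Fin r → ZMod 2) := S.toFinset with hA
    have hAcard : A.card = Multiset.card S := Multiset.toFinset_card_of_nodup hnd
    have hb : 1 ≤ 2 ^ (r - 1) := Nat.one_le_two_pow
    have hApos : 0 < A.card := by
      rw [hAcard]; omega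
    obtain ⟨a, ha⟩ := Finset.card_pos.mp hApos
    have haS : a ∈ S := Multiset.mem_toFinset.mp ha
    set B : Finset (Fin r → ZMod 2) := A.image (fun x => a + x) with hB
    have hdisj : Disjoint A B := by
      rw [Finset.disjoint_right]
      intro b hb hbA
      rw [hB, Finset.mem_image] at hb
      obtain ⟨x, hxA, rfl⟩ := hb
      have hxS : x ∈ S := Multiset.mem_toFinset.mp hxA
      by_cases hax : x = a
      · subst hax
        rw [zmod2_self_add r x] at hbA
        exact h0 (Multiset.mem_toFinset.mp hbA)
      · exact hsf a haS x hxS (Ne.symm hax) (Multiset.mem_toFinset.mp hbA)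
    have hBcard : B.card = A.card :=
      Finset.card_image_of_injective A (add_right_injective a)
    have hle : (A ∪ B).card ≤ Fintype.card (Fin r → ZMod 2) := Finset.card_le_univ _
    rw [Finset.card_union_of_disjoint hdisj, hBcard] at hle
    have hfc : Fintype.card (Fin r → ZMod 2) = 2 ^ r := by
      rw [Fintype.card_fun, ZMod.card, Fintype.card_fin]
    have hpow : 2 ^ (r - 1) * 2 = 2 ^ r := by
      rw [← pow_succ]
      congr 1
      omega
    rw [hfc] at hle
    omega
  · -- lower bound construction
    obtain ⟨k, rfl⟩ : ∃ k, r = k + 1 := ⟨r - 1, by omega⟩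
    set f : (Fin k → ZMod 2) → (Fin (k + 1) → ZMod 2) := fun w => Fin.cons 1 w with hf
    have hfinj : Function.Injective f := by
      intro w w' h
      funext i
      have h2 := congrFun h i.succ
      simpa [hf] using h2
    refine ⟨(Finset.univ : Finset (Fin k → ZMod 2)).val.map f, ?_, ?_⟩
    · simp [Fintype.card_fun]
    · rintro ⟨T, hTS, hT0, hcard, hsum⟩
      have hmem : ∀ v ∈ T, v 0 = 1 := by
        intro v hv
        have hvS := Multiset.mem_of_le hTS hv
        rw [Multiset.mem_map] at hvS
        obtain ⟨w, _, rfl⟩ := hvS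
        simp [hf]
      have hnd : ((Finset.univ : Finset (Fin k → ZMod 2)).val.map f).Nodup :=
        Multiset.Nodup.map hfinj Finset.univ.nodup
      have hpos : 0 < Multiset.card T := Multiset.card_pos.mpr hT0
      have hc : Multiset.card T = 1 ∨ Multiset.card T = 2 ∨ Multiset.card T = 3 := by omega
      rcases hc with hc | hc | hc
      · obtain ⟨x, rfl⟩ := Multiset.card_eq_one.mp hc
        rw [Multiset.sum_singleton] at hsum
        have := hmem x (Multiset.mem_singleton_self x)
        rw [hsum] at this
        simp at this
      · obtain ⟨x, y, rfl⟩ := Multiset.card_eq_two.mp hc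
        have hsum' : x + y = 0 := by simpa using hsum
        have hyx : y = x := by
          have := eq_neg_of_add_eq_zero_right hsum'
          rw [zmod2_neg] at this
          exact this.symm ▸ rfl
        subst hyx
        have hcount := Multiset.le_iff_count.mp hTS y
        rw [Multiset.nodup_iff_count_le_one] at hnd
        have h1 := hnd y
        have h2 : Multiset.count y ({y, y} : Multiset (Fin (k+1) → ZMod 2)) = 2 := by
          simp [Multiset.insert_eq_cons]
        omega
      · obtain ⟨x, y, z, rfl⟩ := Multiset.card_eq_three.mp hc
        have hx := hmem x (by simp)
        have hy := hmem y (by simp)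
        have hz := hmem z (by simp)
        have hsum' : x + y + z = 0 := by simpa [add_assoc] using hsum
        have := congrFun hsum' 0
        simp only [Pi.add_apply, Pi.zero_apply, hx, hy, hz] at this
        exact absurd this (by decide)
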